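/- Let A be Hermitian with A = A₁A₂ = A₂A₁. Let P₁ = (A₁A₁*)^{1/2} be the left polar factor of A₁ and P₂ = (A₂*A₂)^{1/2} the right polar factor of A₂. Then the positive semi-definite polar factor P = (A²)^{1/2} of A satisfies P = P₁P₂ = P₂P₁. -/

import Mathlib

open Matrix
open scoped ComplexOrder

/-- The spectral norm (operator 2-norm) of a complex matrix. -/
noncomputable def specNorm {m n : Type*} [Fintype m] [Fintype n] [DecidableEq n]
    (A : Matrix m n ℂ) : ℝ :=
  ‖LinearMap.toContinuousLinearMap (Matrix.toEuclideanLin A)‖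

/-- `B` is the Moore–Penrose pseudoinverse of `A` (the four Penrose conditions). -/
def IsMP {m n : Type*} [Fintype m] [Fintype n]
    (A : Matrix m n ℂ) (B : Matrix n m ℂ) : Prop :=
  A * B * A = A ∧ B * A * B = B ∧ (A * B)ᴴ = A * B ∧ (B * A)ᴴ = B * A

namespace Matrix.PosSemidef

noncomputable def sqrt {n : Type*} [Fintype n] [DecidableEq n] {A : Matrix n n ℂ}
    (hA : A.PosSemidef) : Matrix n n ℂ :=
  (hA.1.eigenvectorUnitary : Matrix n n ℂ) * diagonal ((↑) ∘ Real.sqrt ∘ hA.1.eigenvalues) *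
    star (hA.1.eigenvectorUnitary : Matrix n n ℂ)

open scoped MatrixOrder in
lemma sqrt_eq_cfcSqrt {n : Type*} [Fintype n] [DecidableEq n] {A : Matrix n n ℂ}
    (hA : A.PosSemidef) : hA.sqrt = CFC.sqrt A := by
  rw [CFC.sqrt_eq_cfc, cfc_nnreal_eq_real _ A, hA.1.cfc_eq]
  simp only [IsHermitian.cfc, Real.coe_sqrt, Real.coe_toNNReal', sqrt, Unitary.conjStarAlgAut_apply]
  congr 3
  funext i
  simp [hA.eigenvalues_nonneg i]

open scoped MatrixOrder in
lemma posSemidef_sqrt {n : Type*} [Fintype n] [DecidableEq n] {A : Matrix n n ℂ}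
    (hA : A.PosSemidef) : hA.sqrt.PosSemidef := by
  rw [sqrt_eq_cfcSqrt]; exact (CFC.sqrt_nonneg A).posSemidef

open scoped MatrixOrder in
lemma sqrt_mul_self {n : Type*} [Fintype n] [DecidableEq n] {A : Matrix n n ℂ}
    (hA : A.PosSemidef) : hA.sqrt * hA.sqrt = A := by
  rw [sqrt_eq_cfcSqrt]; exact CFC.sqrt_mul_sqrt_self A hA.nonneg

open scoped MatrixOrder in
lemma eq_sqrt_of_sq_eq {n : Type*} [Fintype n] [DecidableEq n] {A B : Matrix n n ℂ}
    (hA : A.PosSemidef) (hB : B.PosSemidef) (h : A ^ 2 = B) : A = hB.sqrt := by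
  rw [sqrt_eq_cfcSqrt]
  exact (CFC.sqrt_unique (by rw [← h, pow_two]) hA.nonneg).symm

open scoped MatrixOrder in
lemma eq_of_sq_eq_sq {n : Type*} [Fintype n] [DecidableEq n] {A B : Matrix n n ℂ}
    (hA : A.PosSemidef) (hB : B.PosSemidef) (h : A ^ 2 = B ^ 2) : A = B := by
  exact (hA.eq_sqrt_of_sq_eq (hB.pow 2) h).trans (hB.eq_sqrt_of_sq_eq (hB.pow 2) rfl).symm

end Matrix.PosSemidef

/-- `A` Hermitian, `A = A₁A₂ = A₂A₁`, `P₁ = (A₁A₁ᴴ)^{1/2}`,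
`P₂ = (A₂ᴴA₂)^{1/2}`, `P = (A²)^{1/2}` the positive semi-definite polar factor of `A`.
Then `P = P₁P₂ = P₂P₁`.  (All square roots are the unique positive semi-definite
square roots.) -/
lemma commute_sqrt {n : Type*} [Fintype n] [DecidableEq n] {A : Matrix n n ℂ}
    (hA : A.PosSemidef) (B : Matrix n n ℂ) (h : B * A = A * B) :
    B * hA.sqrt = hA.sqrt * B := by
  set U : Matrix n n ℂ := (hA.1.eigenvectorUnitary : Matrix n n ℂ) with hUdef
  have hU : star U * U = 1 := Unitary.coe_star_mul_self _
  have hU' : U * star U = 1 := Unitary.coe_mul_star_self _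
  set lam := hA.1.eigenvalues with hlam
  set C : Matrix n n ℂ := star U * B * U with hCdef
  have hB : B = U * C * star U := by
    rw [hCdef]
    symm
    calc U * (star U * B * U) * star U
        = (U * star U) * B * (U * star U) := by noncomm_ring
      _ = B := by rw [hU']; simp
  have hDC : C * diagonal ((↑) ∘ lam) = diagonal ((↑) ∘ lam) * C := by
    have hspec := hA.1.spectral_theorem
    have h2 : (star U * B * U) * (star U * A * U) = (star U * A * U) * (star U * B * U) := by
      calc (star U * B * U) * (star U * A * U)
          = star U * (B * (U * star U) * A) * U := by noncomm_ring
        _ = star U * (B * A) * U := by rw [hU']; simp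
        _ = star U * (A * B) * U := by rw [h]
        _ = star U * (A * (U * star U) * B) * U := by rw [hU']; simp
        _ = (star U * A * U) * (star U * B * U) := by noncomm_ring
    have h3 : star U * A * U = diagonal ((↑) ∘ lam) := by
      rw [hspec]
      calc star U * (U * diagonal ((↑) ∘ lam) * star U) * U
          = (star U * U) * diagonal ((↑) ∘ lam) * (star U * U) := by noncomm_ring
        _ = diagonal ((↑) ∘ lam) := by rw [hU]; simp
    rw [h3] at h2
    exact h2
  have key : C * diagonal ((↑) ∘ Real.sqrt ∘ lam) = diagonal ((↑) ∘ Real.sqrt ∘ lam) * C := by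
    ext i j
    have hij := congrFun (congrFun hDC i) j
    simp only [mul_diagonal, diagonal_mul, Function.comp_apply] at hij ⊢
    by_cases hc : C i j = 0
    · simp [hc]
    · have : (lam j : ℂ) = (lam i : ℂ) := by
        rw [mul_comm ((lam i : ℂ))] at hij
        exact mul_left_cancel₀ hc hij
      have hr : lam j = lam i := by exact_mod_cast this
      rw [hr, mul_comm]
  have hsq : hA.sqrt = U * diagonal ((↑) ∘ Real.sqrt ∘ lam) * star U := rfl
  rw [hB, hsq]
  calc (U * C * star U) * (U * diagonal ((↑) ∘ Real.sqrt ∘ lam) * star U)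
      = U * (C * (star U * U) * diagonal ((↑) ∘ Real.sqrt ∘ lam)) * star U := by noncomm_ring
    _ = U * (C * diagonal ((↑) ∘ Real.sqrt ∘ lam)) * star U := by rw [hU]; simp
    _ = U * (diagonal ((↑) ∘ Real.sqrt ∘ lam) * C) * star U := by rw [key]
    _ = U * (diagonal ((↑) ∘ Real.sqrt ∘ lam) * (star U * U) * C) * star U := by rw [hU]; simp
    _ = (U * diagonal ((↑) ∘ Real.sqrt ∘ lam) * star U) * (U * C * star U) := by noncomm_ring

theorem stmt7 (n : ℕ) (A A₁ A₂ P P₁ P₂ : Matrix (Fin n) (Fin n) ℂ)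
    (hA : A.IsHermitian) (hfac : A = A₁ * A₂) (hfac' : A₁ * A₂ = A₂ * A₁)
    (hP₁ : P₁.PosSemidef) (hP₁sq : P₁ * P₁ = A₁ * A₁ᴴ)
    (hP₂ : P₂.PosSemidef) (hP₂sq : P₂ * P₂ = A₂ᴴ * A₂)
    (hP : P.PosSemidef) (hPsq : P * P = A * A) :
    P = P₁ * P₂ ∧ P₁ * P₂ = P₂ * P₁ := by
  have hfac2 : A = A₂ * A₁ := hfac.trans hfac'
  have hAH : A₁ᴴ * A₂ᴴ = A := by
    rw [← conjTranspose_mul, ← hfac2, hA.eq]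
  have e1 : (P₁ * P₁) * (P₂ * P₂) = A * A := by
    rw [hP₁sq, hP₂sq]
    calc A₁ * A₁ᴴ * (A₂ᴴ * A₂) = A₁ * (A₁ᴴ * A₂ᴴ) * A₂ := by noncomm_ring
      _ = A₁ * A * A₂ := by rw [hAH]
      _ = A₁ * (A₂ * A₁) * A₂ := by rw [hfac2]
      _ = (A₁ * A₂) * (A₁ * A₂) := by noncomm_ring
      _ = A * A := by rw [← hfac]
  have e2 : (P₂ * P₂) * (P₁ * P₁) = A * A := by
    rw [hP₂sq, hP₁sq]
    calc A₂ᴴ * A₂ * (A₁ * A₁ᴴ) = A₂ᴴ * (A₂ * A₁) * A₁ᴴ := by noncomm_ring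
      _ = A₂ᴴ * A * A₁ᴴ := by rw [hfac2]
      _ = A₂ᴴ * Aᴴ * A₁ᴴ := by rw [hA.eq]
      _ = (A₁ * A * A₂)ᴴ := by simp [conjTranspose_mul, mul_assoc]
      _ = (A₁ * (A₂ * A₁) * A₂)ᴴ := by rw [hfac2]
      _ = ((A₁ * A₂) * (A₁ * A₂))ᴴ := by noncomm_ring
      _ = (A * A)ᴴ := by rw [← hfac]
      _ = Aᴴ * Aᴴ := by rw [conjTranspose_mul]
      _ = A * A := by rw [hA.eq]
  -- P₂ = sqrt of P₂*P₂
  have hQ₂ : (P₂ * P₂).PosSemidef := by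
    rw [hP₂sq]; exact posSemidef_conjTranspose_mul_self _
  have hP₂eq : P₂ = hQ₂.sqrt := hP₂.eq_sqrt_of_sq_eq hQ₂ (by rw [pow_two])
  have hQ₁ : (P₁ * P₁).PosSemidef := by
    rw [hP₁sq]; exact posSemidef_self_mul_conjTranspose _
  have hP₁eq : P₁ = hQ₁.sqrt := hP₁.eq_sqrt_of_sq_eq hQ₁ (by rw [pow_two])
  -- P₁² commutes with P₂
  have c1 : (P₁ * P₁) * P₂ = P₂ * (P₁ * P₁) := by
    rw [hP₂eq]
    exact commute_sqrt hQ₂ (P₁ * P₁) (e1.trans e2.symm)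
  -- P₂ commutes with P₁
  have comm : P₂ * P₁ = P₁ * P₂ := by
    rw [hP₁eq]
    exact commute_sqrt hQ₁ P₂ c1.symm
  -- P₁P₂ is PSD : P₁P₂ = √P₁ P₂ √P₁
  have cS : P₂ * hP₁.sqrt = hP₁.sqrt * P₂ := commute_sqrt hP₁ P₂ comm
  have hprod : (P₁ * P₂).PosSemidef := by
    have : P₁ * P₂ = hP₁.sqrt * P₂ * hP₁.sqrtᴴ := by
      rw [hP₁.posSemidef_sqrt.isHermitian.eq]
      calc P₁ * P₂ = (hP₁.sqrt * hP₁.sqrt) * P₂ := by rw [hP₁.sqrt_mul_self]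
        _ = hP₁.sqrt * (P₂ * hP₁.sqrt) := by rw [mul_assoc, ← cS]
        _ = hP₁.sqrt * P₂ * hP₁.sqrt := by rw [mul_assoc]
    rw [this]
    exact hP₂.mul_mul_conjTranspose_same _
  have hsq : P ^ 2 = (P₁ * P₂) ^ 2 := by
    rw [pow_two, pow_two, hPsq]
    calc A * A = (P₁ * P₁) * (P₂ * P₂) := e1.symm
      _ = P₁ * ((P₁ * P₂) * P₂) := by noncomm_ring
      _ = P₁ * ((P₂ * P₁) * P₂) := by rw [← comm]
      _ = (P₁ * P₂) * (P₁ * P₂) := by noncomm_ring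
  exact ⟨hP.eq_of_sq_eq_sq hprod hsq, comm.symm⟩
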